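/- The family (K_{0,1}(w)), indexed by all nonempty words w over the alphabet {2,3}, is linearly independent over ℚ in A; that is, the zinbiel subalgebra of A generated by δ_{(1,0)} and δ_{(1,1,0)} is free on these two generators. -/

import Mathlib

/-- Words over the alphabet `{0,1}`, encoded with `false` = `0` and `true` = `1`. -/
abbrev Word : Type := List Bool

/-- The ℚ-vector space `A` of finitely supported functions on words over `{0,1}`. -/
abbrev A01 : Type := Word →₀ ℚ

/-- The basis element `δ_x` of `A` attached to a word `x`. -/
noncomputable def δ (x : Word) : A01 := Finsupp.single x 1

/-- Prepend the letter `a` to every word of a formal sum. -/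
noncomputable def prependLetter (a : Bool) (f : A01) : A01 :=
  Finsupp.mapDomain (List.cons a) f

/-- The shuffle product of two words, as an element of `A`. -/
noncomputable def shuffle : Word → Word → A01
  | [], y => δ y
  | a :: x, [] => δ (a :: x)
  | a :: x, b :: y =>
      prependLetter a (shuffle x (b :: y)) + prependLetter b (shuffle (a :: x) y)
  termination_by x y => x.length + y.length

/-- The half-shuffle product on basis words: `δ_{a::x} ≺ δ_y = a·(x ш y)`, `δ_[] ≺ δ_y = 0`. -/
noncomputable def halfWord : Word → Word → A01
  | [], _ => 0
  | a :: x, y => prependLetter a (shuffle x y)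

/-- The half-shuffle (zinbiel) product `≺` on `A`, extended bilinearly from basis words. -/
noncomputable def half (f g : A01) : A01 :=
  f.sum fun x c => g.sum fun y d => (c * d) • halfWord x y

/-- The right-parenthesized product `K(a_1, …, a_n) = a_1 ≺ (a_2 ≺ (⋯ ≺ a_n))`,
with `K(a_n) = a_n`, and `δ_[]` (the shuffle unit) for the empty list. -/
noncomputable def Klist : List A01 → A01
  | [] => δ []
  | [a] => a
  | a :: b :: l => half a (Klist (b :: l))

/-- The generators `z_2 = δ_{(1,0)}` and `z_3 = u·δ_{(1,0,0)} + v·δ_{(1,1,0)}`;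
letters of the alphabet `{2,3}` are encoded with `false` = `2` and `true` = `3`. -/
noncomputable def zgen (u v : ℚ) : Bool → A01
  | false => δ [true, false]
  | true => u • δ [true, false, false] + v • δ [true, true, false]

/-- `K_{u,v}(w)` for a word `w` over `{2,3}` (encoded with `false` = `2`, `true` = `3`). -/
noncomputable def Kuv (u v : ℚ) (w : List Bool) : A01 :=
  Klist (w.map (zgen u v))

/-- The block substitution `2 ↦ (1,0)`, `3 ↦ (1,0,0)`. -/
def blocks0 (c : Bool) : Word := if c then [true, false, false] else [true, false]

/-- The block substitution `2 ↦ (1,0)`, `3 ↦ (1,1,0)`. -/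
def blocks1 (c : Bool) : Word := if c then [true, true, false] else [true, false]

/-- `cat₀(w)`: substitute `2 ↦ (1,0)`, `3 ↦ (1,0,0)` and concatenate. -/
def cat0 (w : List Bool) : Word := (w.map blocks0).flatten

/-- `cat₁(w)`: substitute `2 ↦ (1,0)`, `3 ↦ (1,1,0)` and concatenate. -/
def cat1 (w : List Bool) : Word := (w.map blocks1).flatten

/-- A good-shuffle realizing the word `x` from the words `ws = (w^1, …, w^n)`:
a partition `S` of the positions of `x`, reading `x` along `S j` gives `w^j`,
and the minima of the parts are in increasing order. -/
def GoodShuffle (ws : List Word) (x : Word)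
    (S : Fin ws.length → Finset (Fin x.length)) : Prop :=
  (∀ p : Fin x.length, ∃! j, p ∈ S j) ∧
  (∀ j, ((S j).sort (· ≤ ·)).map x.get = ws.get j) ∧
  (∀ j k, j < k → (S j).min < (S k).min)

/-- The weight of a word over `{2,3}`: the sum of its letters. -/
def wt (w : List Bool) : ℕ := (w.map fun c => if c then 3 else 2).sum

-- AUX START
section Aux

lemma prepend_apply_cons (a : Bool) (f : A01) (t : Word) :
    prependLetter a f (a :: t) = f t := by
  unfold prependLetter
  exact Finsupp.mapDomain_apply (fun x y h => by injection h) f t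

lemma prepend_ne_zero {a : Bool} {f : A01} {z : Word} (h : prependLetter a f z ≠ 0) :
    ∃ t, z = a :: t ∧ f t ≠ 0 := by
  rcases z with _ | ⟨b, t⟩
  · exact absurd (Finsupp.mapDomain_notin_range f [] (by simp)) h
  · by_cases hb : b = a
    · subst hb
      exact ⟨t, rfl, by rwa [prepend_apply_cons] at h⟩
    · exact absurd (Finsupp.mapDomain_notin_range f (b :: t) (by simp; exact fun h' => hb h'.symm)) h

lemma prepend_nonneg {a : Bool} {f : A01} (hf : ∀ t, 0 ≤ f t) (z : Word) :
    0 ≤ prependLetter a f z := by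
  by_cases h : prependLetter a f z = 0
  · simp [h]
  · obtain ⟨t, rfl, -⟩ := prepend_ne_zero h
    rw [prepend_apply_cons]; exact hf t

lemma shuffle_nonneg : ∀ u y : Word, ∀ z, 0 ≤ shuffle u y z
  | [], y, z => by
      rw [shuffle]; unfold δ
      rw [Finsupp.single_apply]
      split <;> norm_num
  | a :: x, [], z => by
      rw [shuffle]; unfold δ
      rw [Finsupp.single_apply]
      split <;> norm_num
  | a :: x, b :: y, z => by
      rw [shuffle, Finsupp.add_apply]
      have h1 := prepend_nonneg (f := shuffle x (b :: y)) (a := a)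
        (shuffle_nonneg x (b :: y)) z
      have h2 := prepend_nonneg (f := shuffle (a :: x) y) (a := b)
        (shuffle_nonneg (a :: x) y) z
      linarith
  termination_by u y => u.length + y.length

lemma shuffle_cat_pos : ∀ u y : Word, 0 < shuffle u y (u ++ y)
  | [], y => by rw [shuffle]; unfold δ; simp
  | a :: x, [] => by rw [shuffle]; unfold δ; simp
  | a :: x, b :: y => by
      rw [shuffle, Finsupp.add_apply]
      have h1 : prependLetter a (shuffle x (b :: y)) ((a :: x) ++ (b :: y))
          = shuffle x (b :: y) (x ++ (b :: y)) := by
        rw [List.cons_append, prepend_apply_cons]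
      have h2 := prepend_nonneg (f := shuffle (a :: x) y) (a := b)
        (shuffle_nonneg (a :: x) y) ((a :: x) ++ (b :: y))
      have h3 := shuffle_cat_pos x (b :: y)
      rw [h1]
      linarith
  termination_by u y => u.length + y.length

lemma shuffle_len : ∀ u y : Word, ∀ z, shuffle u y z ≠ 0 → z.length = u.length + y.length
  | [], y, z => by
      rw [shuffle]; unfold δ
      intro h
      have : y = z := by by_contra hne; rw [Finsupp.single_apply, if_neg hne] at h; exact h rfl
      simp [← this]
  | a :: x, [], z => by
      rw [shuffle]; unfold δ
      intro h
      have : a :: x = z := by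
        by_contra hne; rw [Finsupp.single_apply, if_neg hne] at h; exact h rfl
      simp [← this]
  | a :: x, b :: y, z => by
      rw [shuffle, Finsupp.add_apply]
      intro h
      rcases (show prependLetter a (shuffle x (b :: y)) z ≠ 0 ∨ prependLetter b (shuffle (a :: x) y) z ≠ 0 by
          by_contra hc; push_neg at hc; rw [hc.1, hc.2] at h; simp at h) with h1 | h1
      · obtain ⟨t, rfl, ht⟩ := prepend_ne_zero h1
        have := shuffle_len x (b :: y) t ht
        simp [this]; omega
      · obtain ⟨t, rfl, ht⟩ := prepend_ne_zero h1
        have := shuffle_len (a :: x) y t ht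
        simp [this]; omega
  termination_by u y => u.length + y.length

end Aux
section Aux2

lemma delta_apply (x z : Word) : δ x z = if x = z then 1 else 0 := by
  unfold δ; rw [Finsupp.single_apply]

lemma delta_ne_zero {x z : Word} (h : δ x z ≠ 0) : z = x := by
  by_contra hne; rw [delta_apply, if_neg (fun h' => hne h'.symm)] at h; exact h rfl

lemma half_delta_apply (x₀ : Word) (g : A01) (z : Word) :
    half (δ x₀) g z = ∑ y ∈ g.support, g y * halfWord x₀ y z := by
  unfold half δ
  rw [Finsupp.sum_single_index (by simp)]
  rw [Finsupp.sum_apply, Finsupp.sum]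
  refine Finset.sum_congr rfl fun y hy => ?_
  rw [Finsupp.smul_apply, one_mul, smul_eq_mul]

lemma half_delta_ne_zero {x₀ : Word} {g : A01} {z : Word} (h : half (δ x₀) g z ≠ 0) :
    ∃ y, g y ≠ 0 ∧ halfWord x₀ y z ≠ 0 := by
  rw [half_delta_apply] at h
  obtain ⟨y, hy, hne⟩ := Finset.exists_ne_zero_of_sum_ne_zero h
  exact ⟨y, Finsupp.mem_support_iff.mp hy, fun h0 => hne (by rw [h0, mul_zero])⟩

/-- the tail of `blocks1`. -/
def tl1 (a : Bool) : Word := if a then [true, false] else [false]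

lemma blocks1_eq (a : Bool) : blocks1 a = true :: tl1 a := by cases a <;> rfl

lemma zgen01 (a : Bool) : zgen 0 1 a = δ (blocks1 a) := by
  cases a <;> simp [zgen, blocks1]

lemma Kuv_single (a : Bool) : Kuv 0 1 [a] = δ (blocks1 a) := by
  rw [Kuv, List.map_cons, List.map_nil, Klist, zgen01]

lemma Kuv_cons (a b : Bool) (w : List Bool) :
    Kuv 0 1 (a :: b :: w) = half (δ (blocks1 a)) (Kuv 0 1 (b :: w)) := by
  rw [Kuv, List.map_cons, List.map_cons, Klist, zgen01, Kuv, List.map_cons]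

lemma halfWord_nonneg (x y : Word) (z : Word) : 0 ≤ halfWord x y z := by
  cases x with
  | nil => rw [halfWord]; simp
  | cons a x => rw [halfWord]; exact prepend_nonneg (shuffle_nonneg x y) z

lemma K_nonneg : ∀ w : List Bool, ∀ z, 0 ≤ Kuv 0 1 w z
  | [], z => by
      rw [Kuv, List.map_nil, Klist, delta_apply]; split <;> norm_num
  | [a], z => by
      rw [Kuv_single, delta_apply]; split <;> norm_num
  | a :: b :: w, z => by
      rw [Kuv_cons, half_delta_apply]
      exact Finset.sum_nonneg fun y _ =>
        mul_nonneg (K_nonneg (b :: w) y) (halfWord_nonneg _ y z)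

lemma cat1_cons (a : Bool) (w : List Bool) : cat1 (a :: w) = blocks1 a ++ cat1 w := by
  simp [cat1]

end Aux2

section Lex

lemma lt_head {l m : Word} : (false :: l) < (true :: m) := List.Lex.rel (by decide)

lemma not_le_nil {a : Bool} {l : Word} : ¬ ((a :: l) ≤ ([] : Word)) := by
  intro h
  rcases le_iff_lt_or_eq.mp h with h | h
  · exact List.not_lex_nil h
  · exact List.cons_ne_nil a l h

lemma le_cons_inv {a : Bool} {l m : Word} (h : (a :: l) ≤ (a :: m)) : l ≤ m := by
  rcases le_iff_lt_or_eq.mp h with h | h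
  · rcases h with _ | ⟨h⟩ | ⟨h⟩
    · exact absurd ‹_› (lt_irrefl a)
    · exact le_of_lt ‹_›
  · exact le_of_eq (by injection h)

lemma head_true_of_le {ct y : Word} (h : (true :: ct) ≤ y) : ∃ yt, y = true :: yt := by
  rcases y with _ | ⟨b, yt⟩
  · exact absurd h not_le_nil
  · cases b
    · exact absurd h (not_le_of_gt lt_head)
    · exact ⟨yt, rfl⟩

lemma not_true_le_false {l m : Word} : ¬ ((true :: l) ≤ (false :: m)) :=
  fun h => absurd h (not_le_of_gt lt_head)

end Lex
section Key

lemma lemA {ct y z : Word} (hcy : (true :: ct) ≤ y) (hz : shuffle [false] y z ≠ 0) :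
    (false :: true :: ct) ≤ z := by
  obtain ⟨yt, rfl⟩ := head_true_of_le hcy
  rw [shuffle, Finsupp.add_apply] at hz
  rcases (show prependLetter false (shuffle [] (true :: yt)) z ≠ 0 ∨
      prependLetter true (shuffle [false] yt) z ≠ 0 by
    by_contra hc; push_neg at hc; rw [hc.1, hc.2] at hz; simp at hz) with h1 | h1
  · obtain ⟨t, rfl, ht⟩ := prepend_ne_zero h1
    rw [shuffle] at ht
    have := delta_ne_zero ht
    subst this
    exact List.cons_le_cons false hcy
  · obtain ⟨t, rfl, -⟩ := prepend_ne_zero h1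
    exact le_of_lt lt_head

lemma lemB : ∀ w'' : List Bool, w'' ≠ [] → ∀ y z : Word,
    y.length = (cat1 w'').length → cat1 w'' ≤ y → shuffle [true, false] y z ≠ 0 →
    (true :: false :: cat1 w'') ≤ z := by
  intro w''
  induction w'' with
  | nil => exact fun h => absurd rfl h
  | cons d w₃ ih =>
    intro _ y z hlen hcy hz
    have hcshape : ∃ ct, cat1 (d :: w₃) = true :: ct := by
      cases d <;> simp [cat1_cons, blocks1]
    obtain ⟨ct, hct⟩ := hcshape
    rw [hct] at hcy
    obtain ⟨yt, rfl⟩ := head_true_of_le hcy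
    rw [shuffle, Finsupp.add_apply] at hz
    rcases (show prependLetter true (shuffle [false] (true :: yt)) z ≠ 0 ∨
        prependLetter true (shuffle [true, false] yt) z ≠ 0 by
      by_contra hc; push_neg at hc; rw [hc.1, hc.2] at hz; simp at hz) with h1 | h1
    · obtain ⟨z'', rfl, hz''⟩ := prepend_ne_zero h1
      have := lemA hcy hz''
      rw [hct]
      exact List.cons_le_cons true this
    · obtain ⟨z'', rfl, hz''⟩ := prepend_ne_zero h1
      refine List.cons_le_cons true (show (false :: cat1 (d :: w₃)) ≤ z'' from ?_)
      rcases yt with _ | ⟨e, y₃⟩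
      · rw [shuffle] at hz''
        have := delta_ne_zero hz''
        subst this
        rw [hct]
        exact le_of_lt lt_head
      · rw [shuffle, Finsupp.add_apply] at hz''
        rcases (show prependLetter true (shuffle [false] (e :: y₃)) z'' ≠ 0 ∨
            prependLetter e (shuffle [true, false] y₃) z'' ≠ 0 by
          by_contra hc; push_neg at hc; rw [hc.1, hc.2] at hz''; simp at hz'') with h2 | h2
        · obtain ⟨z₃, rfl, -⟩ := prepend_ne_zero h2
          rw [hct]
          exact le_of_lt lt_head
        · obtain ⟨z₃, rfl, hz₃⟩ := prepend_ne_zero h2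
          cases e
          · -- e = false : need z₃ ≥ cat1 (d :: w₃)
            cases d
            · -- d = false : c = true :: false :: cat1 w₃
              have hc2 : cat1 (false :: w₃) = true :: false :: cat1 w₃ := by
                simp [cat1_cons, blocks1]
              have hct2 : ct = false :: cat1 w₃ := by
                have hcc : true :: ct = true :: false :: cat1 w₃ := by rw [← hct, hc2]
                injection hcc
              rw [hct2] at hcy
              have hle3 : cat1 w₃ ≤ y₃ := le_cons_inv (le_cons_inv hcy)
              have hlen3 : y₃.length = (cat1 w₃).length := by
                rw [hc2] at hlen; simpa using hlen
              rcases w₃ with _ | ⟨b3, w4⟩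
              · have : y₃ = [] := by
                  simpa [cat1] using List.length_eq_zero_iff.mp (by simpa [cat1] using hlen3)
                subst this
                rw [shuffle] at hz₃
                have := delta_ne_zero hz₃
                subst this
                rw [hc2]
                exact List.cons_le_cons false (by simp [cat1])
              · have := ih (by simp) y₃ z₃ hlen3 hle3 hz₃
                rw [hc2]
                exact List.cons_le_cons false this
            · -- d = true : contradiction from hcy
              have hc2 : cat1 (true :: w₃) = true :: true :: false :: cat1 w₃ := by
                simp [cat1_cons, blocks1]
              rw [← hct, hc2] at hcy
              exact absurd (le_cons_inv hcy) not_true_le_false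
          · -- e = true
            rw [hct]
            exact le_of_lt lt_head

end Key
section Main

lemma cat1_shape {w : List Bool} (hw : w ≠ []) : ∃ ct, cat1 w = true :: ct := by
  rcases w with _ | ⟨a, w⟩
  · exact absurd rfl hw
  · cases a <;> simp [cat1_cons, blocks1]

lemma K_bound : ∀ w : List Bool, w ≠ [] → ∀ z : Word, Kuv 0 1 w z ≠ 0 →
    cat1 w ≤ z ∧ z.length = (cat1 w).length := by
  intro w
  induction w with
  | nil => exact fun h => absurd rfl h
  | cons a w' ih =>
    intro _ z hz
    rcases w' with _ | ⟨b, w''⟩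
    · rw [Kuv_single] at hz
      have := delta_ne_zero hz
      subst this
      constructor
      · simp [cat1_cons, cat1]
      · simp [cat1_cons, cat1]
    · rw [Kuv_cons] at hz
      obtain ⟨y, hy, hhw⟩ := half_delta_ne_zero hz
      obtain ⟨hle, hlen⟩ := ih (by simp) y hy
      rw [blocks1_eq, halfWord] at hhw
      obtain ⟨z', rfl, hz'⟩ := prepend_ne_zero hhw
      have hzlen : z'.length = (tl1 a).length + y.length := shuffle_len _ _ _ hz'
      obtain ⟨ct, hct⟩ := cat1_shape (show (b :: w'') ≠ [] by simp)
      constructor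
      · cases a
        · rw [hct] at hle
          have hA := lemA hle (show shuffle [false] y z' ≠ 0 by
            rwa [show tl1 false = [false] from rfl] at hz')
          have hgoal : cat1 (false :: b :: w'') = true :: false :: true :: ct := by
            simp [cat1_cons, blocks1, hct]
          rw [hgoal]
          exact List.cons_le_cons true hA
        · have hB := lemB (b :: w'') (by simp) y z' hlen hle
            (by rwa [show tl1 true = [true, false] from rfl] at hz')
          have hgoal : cat1 (true :: b :: w'') = true :: true :: false :: cat1 (b :: w'') := by
            simp [cat1_cons, blocks1]
          rw [hgoal]
          exact List.cons_le_cons true hB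
      · rw [cat1_cons, blocks1_eq]
        simp only [List.length_cons, List.length_append, hzlen, hlen]
        omega

lemma K_diag_pos : ∀ w : List Bool, w ≠ [] → 0 < Kuv 0 1 w (cat1 w) := by
  intro w
  induction w with
  | nil => exact fun h => absurd rfl h
  | cons a w' ih =>
    intro _
    rcases w' with _ | ⟨b, w''⟩
    · rw [Kuv_single, delta_apply, if_pos (by simp [cat1_cons, cat1])]
      norm_num
    · rw [Kuv_cons, half_delta_apply]
      have hpos : 0 < Kuv 0 1 (b :: w'') (cat1 (b :: w'')) := ih (by simp)
      apply Finset.sum_pos'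
      · intro y _
        exact mul_nonneg (K_nonneg _ y) (halfWord_nonneg _ y _)
      · refine ⟨cat1 (b :: w''), Finsupp.mem_support_iff.mpr (ne_of_gt hpos), ?_⟩
        apply mul_pos hpos
        have hpt : cat1 (a :: b :: w'') = true :: (tl1 a ++ cat1 (b :: w'')) := by
          cases a <;> simp [cat1_cons, blocks1, tl1]
        rw [blocks1_eq, halfWord, hpt, prepend_apply_cons]
        exact shuffle_cat_pos _ _

lemma cat1_inj : ∀ {w w' : List Bool}, cat1 w = cat1 w' → w = w' := by
  intro w
  induction w with
  | nil =>
    intro w' h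
    rcases w' with _ | ⟨b, w''⟩
    · rfl
    · exfalso
      obtain ⟨ct, hct⟩ := cat1_shape (show (b :: w'') ≠ [] by simp)
      rw [← h] at hct
      simp [cat1] at hct
  | cons a w ih =>
    intro w' h
    rcases w' with _ | ⟨b, w''⟩
    · exfalso
      obtain ⟨ct, hct⟩ := cat1_shape (show (a :: w) ≠ [] by simp)
      rw [h] at hct
      simp [cat1] at hct
    · cases a <;> cases b
      · simp [cat1_cons, blocks1] at h
        rw [ih h]
      · exfalso
        simp [cat1_cons, blocks1] at h
      · exfalso
        simp [cat1_cons, blocks1] at h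
      · simp [cat1_cons, blocks1] at h
        rw [ih h]

end Main
/-- The family `K_{0,1}(w)`, indexed by nonempty words `w` over `{2,3}`
(encoded with `false` = `2`, `true` = `3`), is linearly independent over `ℚ` in `A`:
the zinbiel subalgebra generated by `δ_{(1,0)}` and `δ_{(1,1,0)}` is free on these generators. -/
theorem K01_linearIndependent :
    LinearIndependent ℚ (fun w : {l : List Bool // l ≠ []} => Kuv 0 1 w.1) := by
  rw [linearIndependent_iff']
  intro s g hsum i hi
  by_contra hgi
  have hTne : (s.filter (fun j => g j ≠ 0)).Nonempty :=
    ⟨i, Finset.mem_filter.mpr ⟨hi, hgi⟩⟩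
  obtain ⟨i0, hi0T, hmin⟩ :=
    (s.filter (fun j => g j ≠ 0)).exists_min_image (fun j => cat1 j.1) hTne
  obtain ⟨hi0s, hgi0⟩ := Finset.mem_filter.mp hi0T
  have hval : (∑ j ∈ s, g j • Kuv 0 1 j.1) (cat1 i0.1)
      = g i0 * Kuv 0 1 i0.1 (cat1 i0.1) := by
    rw [Finsupp.finset_sum_apply]
    rw [Finset.sum_eq_single i0]
    · rw [Finsupp.smul_apply, smul_eq_mul]
    · intro j hj hne
      by_cases hgj : g j = 0
      · simp [hgj]
      · have hjT : j ∈ s.filter (fun j => g j ≠ 0) := Finset.mem_filter.mpr ⟨hj, hgj⟩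
        have hle := hmin j hjT
        have hlt : cat1 i0.1 < cat1 j.1 :=
          lt_of_le_of_ne hle (fun he => hne (Subtype.ext (cat1_inj he.symm)))
        have hzero : Kuv 0 1 j.1 (cat1 i0.1) = 0 := by
          by_contra h0
          exact absurd ((K_bound j.1 j.2 _ h0).1) (not_le_of_gt hlt)
        rw [Finsupp.smul_apply, hzero, smul_zero]
    · intro habs
      exact absurd hi0s habs
  rw [hsum] at hval
  have hpos := K_diag_pos i0.1 i0.2
  have : g i0 = 0 := by
    have h0 : (0 : A01) (cat1 i0.1) = 0 := rfl
    rw [h0] at hval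
    exact (mul_eq_zero.mp hval.symm).resolve_right (ne_of_gt hpos)
  exact hgi0 this
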